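/- With T = L + M, R = K + M as above, if T_M is a valuation domain, then for every ideal C of T, the quotient C/MC is an L-vector space of dimension at most 1. -/

import Mathlib

section Setup

variable {T : Type*} [CommRing T] [IsDomain T]

/-- The subring `K + M` of `T`, for a subring `K` and an ideal `M` of `T`. -/
def ringR (K : Subring T) (M : Ideal T) : Subring T where
  carrier := {t | ∃ k ∈ K, ∃ m ∈ M, t = k + m}
  one_mem' := ⟨1, K.one_mem, 0, M.zero_mem, by ring⟩
  zero_mem' := ⟨0, K.zero_mem, 0, M.zero_mem, by ring⟩
  add_mem' := by
    rintro a b ⟨k1, hk1, m1, hm1, rfl⟩ ⟨k2, hk2, m2, hm2, rfl⟩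
    exact ⟨k1 + k2, K.add_mem hk1 hk2, m1 + m2, M.add_mem hm1 hm2, by ring⟩
  neg_mem' := by
    rintro a ⟨k, hk, m, hm, rfl⟩
    exact ⟨-k, K.neg_mem hk, -m, M.neg_mem hm, by ring⟩
  mul_mem' := by
    rintro a b ⟨k1, hk1, m1, hm1, rfl⟩ ⟨k2, hk2, m2, hm2, rfl⟩
    refine ⟨k1 * k2, K.mul_mem hk1 hk2, k1 * m2 + m1 * k2 + m1 * m2, ?_, by ring⟩
    exact M.add_mem (M.add_mem (M.mul_mem_left _ hm2) (M.mul_mem_right _ hm1))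
      (M.mul_mem_left _ hm2)

theorem K_le_ringR (K : Subring T) (M : Ideal T) : K ≤ ringR K M :=
  fun k hk => ⟨k, hk, 0, M.zero_mem, (add_zero k).symm⟩

/-- An ideal `A` of `T`, viewed as a module over a subring `S` of `T`. -/
def idealAsMod (S : Subring T) (A : Ideal T) : Submodule ↥S T where
  carrier := A
  add_mem' := fun ha hb => A.add_mem ha hb
  zero_mem' := A.zero_mem
  smul_mem' := fun r a ha => A.mul_mem_left (r : T) ha

/-- The subring `L` of `T` is a field. -/
def IsFieldSub (L : Subring T) : Prop := ∀ x ∈ L, x ≠ 0 → ∃ y ∈ L, x * y = 1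

/-- `T = L ⊕ M` as additive groups: `L` is a retract of `T` with maximal ideal `M`. -/
def DirectSumDecomp (L : Subring T) (M : Ideal T) : Prop :=
  (∀ t : T, ∃ l ∈ L, ∃ m ∈ M, t = l + m) ∧ ∀ x ∈ L, x ∈ M → x = 0

/-- `L` is the field of fractions of `K` (inside `T`). -/
def IsFracOf (K L : Subring T) : Prop :=
  ∀ l ∈ L, ∃ a ∈ K, ∃ b ∈ K, b ≠ 0 ∧ l * b = a

/-- The module structure on a subring over a smaller subring. -/
noncomputable def modOfLE {K L : Subring T} (h : K ≤ L) : Module ↥K ↥L :=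
  ((Subring.inclusion h).toAlgebra).toModule

/-- `T` localized at the prime `M` is a valuation domain. -/
def ValAtPrime (M : Ideal T) (hp : M.IsPrime) : Prop :=
  @ValuationRing (@Localization.AtPrime T _ M hp) _
    (@IsLocalization.isDomain_of_local_atPrime T _ _ M hp)

/-- A Prüfer domain: every nonzero finitely generated ideal is invertible. -/
def IsPruferDomain (A : Type*) [CommRing A] [IsDomain A] : Prop :=
  ∀ I : Ideal A, I ≠ ⊥ → I.FG →
    IsUnit (I : FractionalIdeal (nonZeroDivisors A) (FractionRing A))

/-- A GCD domain: any two nonzero elements admit a greatest common divisor. -/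
def IsGCDDomain (A : Type*) [CommRing A] [IsDomain A] : Prop :=
  ∀ a b : A, a ≠ 0 → b ≠ 0 →
    ∃ g : A, g ∣ a ∧ g ∣ b ∧ ∀ c : A, c ∣ a → c ∣ b → c ∣ g

/-- The algebra structure of the fraction field of `T` over a subring of `T`. -/
noncomputable def algFrac (S : Subring T) : Algebra ↥S (FractionRing T) :=
  ((algebraMap T (FractionRing T)).comp S.subtype).toAlgebra

end Setup

theorem stmt_8' {T : Type*} [CommRing T] [IsDomain T]
    (M : Ideal T) (hM : M.IsMaximal) (hval : ValAtPrime M hM.isPrime) :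
    ∀ C : Ideal T, ∃ c ∈ C, C ≤ Ideal.span {c} ⊔ M * C := by
  classical
  intro C
  letI : IsDomain (Localization.AtPrime M) :=
    IsLocalization.isDomain_of_local_atPrime (P := M) hM.isPrime
  haveI hvr : ValuationRing (Localization.AtPrime M) := hval
  set f := algebraMap T (Localization.AtPrime M) with hf
  have hinj : Function.Injective f :=
    IsLocalization.injective _ M.primeCompl_le_nonZeroDivisors
  -- colon trick
  have key : ∀ (J : Ideal T), M * C ≤ J → ∀ x ∈ C, ∀ s ∉ M, s * x ∈ J → x ∈ J := by
    intro J hJ x hx s hs hsx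
    have hcol : Ideal.span {x} ≤ J ⊔ Ideal.span {s * x} := by
      have hMle : M ≤ (J ⊔ Ideal.span {s * x}).colon (Ideal.span {x}) := by
        intro m hm
        rw [Ideal.mem_colon_span_singleton]
        exact Ideal.mem_sup_left (hJ (Ideal.mul_mem_mul hm hx))
      have hstop : (J ⊔ Ideal.span {s * x}).colon (Ideal.span {x}) = ⊤ := by
        by_contra hne
        have := hM.eq_of_le hne hMle
        have hsmem : s ∈ (J ⊔ Ideal.span {s * x}).colon (Ideal.span {x}) := by
          rw [Ideal.mem_colon_span_singleton]
          exact Ideal.mem_sup_right (Ideal.mem_span_singleton_self _)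
        rw [← this] at hsmem
        exact hs hsmem
      intro y hy
      rw [Ideal.mem_span_singleton] at hy
      obtain ⟨d, rfl⟩ := hy
      have h1 : (1 : T) ∈ (J ⊔ Ideal.span {s * x}).colon (Ideal.span {x}) :=
        hstop ▸ Submodule.mem_top
      rw [Ideal.mem_colon_span_singleton, one_mul] at h1
      exact Ideal.mul_mem_right d _ h1
    have hx' : x ∈ J ⊔ Ideal.span {s * x} := hcol (Ideal.mem_span_singleton_self x)
    have : Ideal.span {s * x} ≤ J := by
      rw [Ideal.span_le, Set.singleton_subset_iff]; exact hsx
    exact (sup_le le_rfl this) hx'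
  by_cases hcase : ∀ c ∈ C, f c ∈ (M * C).map f
  · refine ⟨0, C.zero_mem, ?_⟩
    intro x hx
    obtain ⟨⟨i, s⟩, heq⟩ :=
      (IsLocalization.mem_map_algebraMap_iff M.primeCompl _).mp (hcase x hx)
    have hxs : x * (s : T) = (i : T) := hinj (by simpa [map_mul] using heq)
    have hsx : (s : T) * x ∈ M * C := by rw [mul_comm (s : T) x, hxs]; exact i.2
    have hxJ : x ∈ Ideal.span {(0 : T)} ⊔ M * C :=
      key _ le_sup_right x hx s s.2 (Ideal.mem_sup_right hsx)
    exact hxJ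
  · push_neg at hcase
    obtain ⟨c, hc, hcnot⟩ := hcase
    refine ⟨c, hc, ?_⟩
    intro x hx
    obtain ⟨t, ht⟩ := ValuationRing.cond (f c) (f x)
    have main : ∀ w, f c * w = f x → x ∈ Ideal.span {c} ⊔ M * C := by
      intro w hw
      obtain ⟨⟨a, s⟩, hws⟩ := IsLocalization.surj M.primeCompl w
      have : f (x * s) = f (c * a) := by
        rw [map_mul, map_mul, ← hw]; rw [mul_assoc, hws]
      have hxs : x * (s : T) = c * a := hinj this
      have : (s : T) * x ∈ Ideal.span {c} := by
        rw [mul_comm (s : T) x, hxs]; exact Ideal.mem_span_singleton.mpr ⟨a, rfl⟩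
      exact key _ le_sup_right x hx s s.2 (Ideal.mem_sup_left this)
    rcases ht with ht | ht
    · exact main t ht
    · by_cases hu : IsUnit t
      · obtain ⟨u, rfl⟩ := hu
        exact main ↑u⁻¹ (by rw [← ht, mul_assoc, Units.mul_inv, mul_one])
      · exfalso
        have htm : t ∈ M.map f := by
          rw [Localization.AtPrime.map_eq_maximalIdeal]
          exact hu
        have : f c ∈ (M * C).map f := by
          rw [Ideal.map_mul, mul_comm (Ideal.map f M)]
          rw [← ht]
          exact Ideal.mul_mem_mul (Ideal.mem_map_of_mem f hx) htm
        exact hcnot this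

/-- `C/MC` is an `L ≅ T/M`-vector space of dimension at most `1`: equivalently,
`C/MC` is a cyclic `T`-module, i.e. `C = Tc + MC` for some `c ∈ C`. -/
theorem stmt_8 {T : Type*} [CommRing T] [IsDomain T]
    (L : Subring T) (M : Ideal T) (K : Subring T)
    (hL : IsFieldSub L) (hM : M.IsMaximal) (hM0 : M ≠ ⊥)
    (hLM : DirectSumDecomp L M) (hKL : K ≤ L) (hKne : K ≠ L)
    (hval : ValAtPrime M hM.isPrime) :
    ∀ C : Ideal T, ∃ c ∈ C, C ≤ Ideal.span {c} ⊔ M * C :=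
  stmt_8' M hM hval
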